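/- Let c ≥ 2, A = {0,…,c−1}, and n ≥ 1. For a word w = ε_1…ε_n ∈ A^n let ι(w) = Σ_{j=0}^{n−1} ε_{n−j} c^j, and let g(w) be the word of length n whose j-th letter is ε_j − ε_{j−1} mod c (with ε_0 := 0). If w, v ∈ A^n are contiguous under the natural enumeration, i.e. ι(v) = ι(w) + 1, then the words g(w) and g(v) differ in exactly one position. -/

import Mathlib

open MeasureTheory Metric Filter Set ENNReal

/-- The natural enumeration `ι(w) = Σ_{j=0}^{n-1} ε_{n-j} c^j` of words of length `n`
(reading `w` as the base-`c` expansion of an integer). Here `w i` is the letter `ε_{i+1}`. -/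
def iotaWord {c n : ℕ} (w : Fin n → Fin c) : ℕ :=
  ∑ j : Fin n, (w j : ℕ) * c ^ (n - 1 - (j : ℕ))

/-- The generalized Gray code on finite words: the `j`-th letter of `g(ε_1 … ε_n)` is
`ε_j - ε_{j-1} (mod c)`, with `ε_0 := 0`. -/
def grayWord {c n : ℕ} (w : Fin n → Fin c) : Fin n → Fin c := fun j =>
  if _ : (j : ℕ) = 0 then w j
  else w j - w ⟨(j : ℕ) - 1, by have := j.isLt; omega⟩

/-- A word with digits `< c` has little-endian value `< c ^ n`. -/
lemma sumLE_lt (c : ℕ) (hc : 1 ≤ c) : ∀ (n : ℕ) (u : Fin n → ℕ), (∀ j, u j < c) →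
    (∑ j : Fin n, u j * c ^ (j : ℕ)) < c ^ n := by
  intro n
  induction n with
  | zero => intro u _; simp
  | succ n ih =>
    intro u hu
    rw [Fin.sum_univ_succ]
    have h1 : ∑ j : Fin n, u j.succ * c ^ ((j.succ : ℕ)) =
        c * ∑ j : Fin n, u j.succ * c ^ (j : ℕ) := by
      rw [Finset.mul_sum]
      refine Finset.sum_congr rfl fun j _ => ?_
      rw [Fin.val_succ, pow_succ]
      ring
    rw [h1]
    have h2 : (∑ j : Fin n, u j.succ * c ^ (j : ℕ)) < c ^ n := by
      have := ih (fun j => u j.succ) (fun j => hu j.succ)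
      simpa using this
    have h3 : c * (∑ j : Fin n, u j.succ * c ^ (j : ℕ)) + c ≤ c * c ^ n := by
      have hh := Nat.mul_le_mul_left c h2
      calc c * (∑ j : Fin n, u j.succ * c ^ (j : ℕ)) + c
          = c * ((∑ j : Fin n, u j.succ * c ^ (j : ℕ)) + 1) := by ring
        _ ≤ c * c ^ n := hh
    have h4 := hu 0
    have h5 : c ^ (n + 1) = c * c ^ n := by rw [pow_succ]; ring
    simp only [Fin.val_zero, pow_zero, mul_one]
    omega

/-- Uniqueness of base-`c` representations of fixed length (little-endian). -/
lemma sumLE_inj (c : ℕ) : ∀ (n : ℕ) (u v : Fin n → ℕ), (∀ j, u j < c) → (∀ j, v j < c) →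
    (∑ j : Fin n, u j * c ^ (j : ℕ)) = (∑ j : Fin n, v j * c ^ (j : ℕ)) → u = v := by
  intro n
  induction n with
  | zero => intro u v _ _ _; funext j; exact absurd j.isLt (by omega)
  | succ n ih =>
    intro u v hu hv h
    have hrw : ∀ x : Fin (n+1) → ℕ, (∑ j : Fin (n+1), x j * c ^ (j : ℕ)) =
        x 0 + c * ∑ j : Fin n, x j.succ * c ^ (j : ℕ) := by
      intro x
      rw [Fin.sum_univ_succ, Finset.mul_sum]
      simp only [Fin.val_zero, pow_zero, mul_one]
      congr 1
      refine Finset.sum_congr rfl fun j _ => ?_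
      rw [Fin.val_succ, pow_succ]
      ring
    rw [hrw u, hrw v] at h
    have hu0 := hu 0
    have hv0 := hv 0
    have hmod : u 0 = v 0 := by
      have h1 : (u 0 + c * ∑ j : Fin n, u j.succ * c ^ (j : ℕ)) % c = u 0 := by
        rw [Nat.add_mul_mod_self_left, Nat.mod_eq_of_lt hu0]
      have h2 : (v 0 + c * ∑ j : Fin n, v j.succ * c ^ (j : ℕ)) % c = v 0 := by
        rw [Nat.add_mul_mod_self_left, Nat.mod_eq_of_lt hv0]
      rw [← h1, ← h2, h]
    have hdiv : (∑ j : Fin n, u j.succ * c ^ (j : ℕ)) = ∑ j : Fin n, v j.succ * c ^ (j : ℕ) := by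
      have hc : 0 < c := by omega
      have := h
      rw [hmod] at this
      have h3 : c * (∑ j : Fin n, u j.succ * c ^ (j : ℕ)) =
          c * ∑ j : Fin n, v j.succ * c ^ (j : ℕ) := by omega
      exact Nat.eq_of_mul_eq_mul_left hc h3
    have htail := ih (fun j => u j.succ) (fun j => v j.succ) (fun j => hu j.succ)
      (fun j => hv j.succ) hdiv
    funext j
    refine Fin.cases ?_ ?_ j
    · exact hmod
    · intro i; exact congrFun htail i

/-- Geometric sum: `Σ_{i<k} (c-1) c^i + 1 = c^k`. -/
lemma geomSum_aux (c : ℕ) (hc : 1 ≤ c) : ∀ k : ℕ,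
    (∑ i ∈ Finset.range k, (c - 1) * c ^ i) + 1 = c ^ k := by
  intro k
  induction k with
  | zero => simp
  | succ k ih =>
    rw [Finset.sum_range_succ]
    have h1 : c ^ (k + 1) = c * c ^ k := by rw [pow_succ]; ring
    have h2 : (c - 1) * c ^ k + c ^ k = c * c ^ k := by
      have : (c - 1) + 1 = c := by omega
      calc (c - 1) * c ^ k + c ^ k = ((c - 1) + 1) * c ^ k := by ring
        _ = c * c ^ k := by rw [this]
    omega

/-- Structure of adding `1` to a little-endian base-`c` representation. -/
lemma succ_struct (c n : ℕ) (hc : 2 ≤ c) (u uv : Fin n → ℕ)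
    (hu : ∀ j, u j < c) (huv : ∀ j, uv j < c)
    (h : (∑ j : Fin n, uv j * c ^ (j : ℕ)) = (∑ j : Fin n, u j * c ^ (j : ℕ)) + 1) :
    ∃ m : Fin n, (∀ j : Fin n, (m : ℕ) < (j : ℕ) → uv j = u j) ∧
      uv m = u m + 1 ∧ u m + 1 < c ∧
      (∀ j : Fin n, (j : ℕ) < (m : ℕ) → uv j = 0 ∧ u j = c - 1) := by
  classical
  have hex : ∃ k, ∃ hk : k < n, u ⟨k, hk⟩ + 1 ≠ c := by
    by_contra hcon
    push_neg at hcon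
    have hall : ∀ j : Fin n, u j = c - 1 := by
      intro j
      have hthis := hcon j.val j.isLt
      simp only [Fin.eta] at hthis
      have hb := hu j
      omega
    have h1 : (∑ j : Fin n, u j * c ^ (j : ℕ)) = ∑ i ∈ Finset.range n, (c - 1) * c ^ i := by
      rw [← Fin.sum_univ_eq_sum_range (fun i => (c - 1) * c ^ i) n]
      exact Finset.sum_congr rfl fun j _ => by rw [hall j]
    have h2 := geomSum_aux c (by omega) n
    have h3 := sumLE_lt c (by omega) n uv huv
    omega
  let m0 := Nat.find hex
  obtain ⟨hm0n, hm0ne⟩ : ∃ hk : m0 < n, u ⟨m0, hk⟩ + 1 ≠ c := Nat.find_spec hex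
  have hmin : ∀ j : Fin n, (j : ℕ) < m0 → u j = c - 1 := by
    intro j hj
    have hnot := Nat.find_min hex hj
    push_neg at hnot
    have := hnot j.isLt
    have hb := hu j
    simp only [Fin.eta] at this
    omega
  set mF : Fin n := ⟨m0, hm0n⟩ with hmF
  set u' : Fin n → ℕ := fun j =>
    if (j : ℕ) < m0 then 0 else if (j : ℕ) = m0 then u j + 1 else u j with hu'
  have key : ∑ j : Fin n, (u' j * c ^ (j : ℕ) + (if (j : ℕ) < m0 then (c - 1) * c ^ (j : ℕ) else 0))
      = ∑ j : Fin n, (u j * c ^ (j : ℕ) + (if (j : ℕ) = m0 then c ^ (j : ℕ) else 0)) := by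
    refine Finset.sum_congr rfl fun j _ => ?_
    rcases lt_trichotomy (j : ℕ) m0 with hlt | heq | hgt
    · rw [hu']
      simp only [if_pos hlt, if_neg (show ¬(j : ℕ) = m0 by omega)]
      rw [hmin j hlt]
      ring
    · rw [hu']
      simp only [if_neg (show ¬(j : ℕ) < m0 by omega), if_pos heq]
      ring
    · rw [hu']
      simp only [if_neg (show ¬(j : ℕ) < m0 by omega),
        if_neg (show ¬(j : ℕ) = m0 by omega)]
  rw [Finset.sum_add_distrib, Finset.sum_add_distrib] at key
  have g1 : (∑ j : Fin n, if (j : ℕ) < m0 then (c - 1) * c ^ (j : ℕ) else 0) + 1 = c ^ m0 := by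
    rw [Fin.sum_univ_eq_sum_range (fun i => if i < m0 then (c - 1) * c ^ i else 0) n]
    have hsub : Finset.range m0 ⊆ Finset.range n := Finset.range_subset_range.2 (le_of_lt hm0n)
    rw [← Finset.sum_subset hsub (fun x _ hx => by
      simp only [Finset.mem_range, not_lt] at hx
      rw [if_neg (by omega)])]
    have : ∑ i ∈ Finset.range m0, (if i < m0 then (c - 1) * c ^ i else 0)
        = ∑ i ∈ Finset.range m0, (c - 1) * c ^ i := by
      refine Finset.sum_congr rfl fun i hi => ?_
      rw [if_pos (Finset.mem_range.1 hi)]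
    rw [this]
    exact geomSum_aux c (by omega) m0
  have g2 : (∑ j : Fin n, if (j : ℕ) = m0 then c ^ (j : ℕ) else 0) = c ^ m0 := by
    rw [Finset.sum_eq_single_of_mem mF (Finset.mem_univ mF)
      (fun j _ hj => if_neg (fun hh => hj (Fin.ext hh)))]
    exact if_pos rfl
  have hsum' : (∑ j : Fin n, u' j * c ^ (j : ℕ)) = (∑ j : Fin n, u j * c ^ (j : ℕ)) + 1 := by
    omega
  have hu'b : ∀ j, u' j < c := by
    intro j
    have hb := hu j
    rw [hu']
    dsimp only
    split_ifs with h1 h2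
    · omega
    · have : j = mF := Fin.ext h2
      rw [this]
      have := hu mF
      omega
    · exact hu j
  have hvu : uv = u' := sumLE_inj c n uv u' huv hu'b (by omega)
  have hmFv : (mF : ℕ) = m0 := rfl
  refine ⟨mF, ?_, ?_, ?_, ?_⟩
  · intro j hj
    rw [hmFv] at hj
    rw [hvu, hu']
    dsimp only
    split_ifs <;> omega
  · rw [hvu, hu']
    dsimp only
    split_ifs <;> omega
  · have := hu mF
    omega
  · intro j hj
    rw [hmFv] at hj
    constructor
    · rw [hvu, hu']
      dsimp only
      split_ifs <;> omega
    · exact hmin j hj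

lemma iotaWord_rev (c n : ℕ) (x : Fin n → Fin c) :
    iotaWord x = ∑ j : Fin n, (x (Fin.rev j) : ℕ) * c ^ (j : ℕ) := by
  rw [iotaWord, ← Equiv.sum_comp (Fin.revPerm (n := n))
    (fun j => (x j : ℕ) * c ^ (n - 1 - (j : ℕ)))]
  refine Finset.sum_congr rfl fun j _ => ?_
  have hj := j.isLt
  simp only [Fin.revPerm_apply]
  congr 2
  rw [Fin.val_rev]
  omega

/-- If `w, v` are contiguous words under the natural enumeration, i.e. `ι(v) = ι(w) + 1`,
then the Gray codes `g(w)` and `g(v)` differ in exactly one position. -/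
theorem grayWord_contiguous_differ_one (c n : ℕ) (hc : 2 ≤ c) (hn : 1 ≤ n)
    (w v : Fin n → Fin c) (hcontig : iotaWord v = iotaWord w + 1) :
    (Finset.univ.filter fun j : Fin n => grayWord w j ≠ grayWord v j).card = 1 := by
  haveI : NeZero c := ⟨by omega⟩
  have hone : (1 : ℕ) % c = 1 := Nat.mod_eq_of_lt (by omega)
  rw [iotaWord_rev, iotaWord_rev] at hcontig
  obtain ⟨mF, hgt', hm', hmb, hlt'⟩ := succ_struct c n hc
    (fun j => (w (Fin.rev j) : ℕ)) (fun j => (v (Fin.rev j) : ℕ))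
    (fun j => (w (Fin.rev j)).isLt) (fun j => (v (Fin.rev j)).isLt) hcontig
  set M : Fin n := Fin.rev mF with hMdef
  have hMv : (M : ℕ) = n - 1 - (mF : ℕ) := by rw [hMdef, Fin.val_rev]; omega
  have hrev : ∀ j : Fin n, ((Fin.rev j : Fin n) : ℕ) = n - 1 - (j : ℕ) := by
    intro j; rw [Fin.val_rev]; have := j.isLt; omega
  -- translate to big-endian facts
  have hWV_lt : ∀ j : Fin n, (j : ℕ) < (M : ℕ) → w j = v j := by
    intro j hj
    have hr : (mF : ℕ) < ((Fin.rev j : Fin n) : ℕ) := by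
      rw [hrev]; have := j.isLt; have := mF.isLt; omega
    have := hgt' (Fin.rev j) hr
    apply Fin.ext
    have hrr : Fin.rev (Fin.rev j) = j := Fin.rev_rev j
    rw [hrr] at this
    exact this.symm
  have hrevM : Fin.rev M = mF := by rw [hMdef]; exact Fin.rev_rev mF
  have hWM : (v M : ℕ) = (w M : ℕ) + 1 := hm'
  have hWMb : (w M : ℕ) + 1 < c := hmb
  have hgt : ∀ j : Fin n, (M : ℕ) < (j : ℕ) → (w j : ℕ) = c - 1 ∧ (v j : ℕ) = 0 := by
    intro j hj
    have hr : ((Fin.rev j : Fin n) : ℕ) < (mF : ℕ) := by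
      rw [hrev]; have := j.isLt; have := mF.isLt; omega
    have hh := hlt' (Fin.rev j) hr
    rw [Fin.rev_rev] at hh
    exact ⟨hh.2, hh.1⟩
  -- Gray codes agree away from M
  have hsame : ∀ j : Fin n, j ≠ M → grayWord w j = grayWord v j := by
    intro j hj
    rcases lt_trichotomy (j : ℕ) (M : ℕ) with h | h | h
    · simp only [grayWord]
      split_ifs with h0
      · exact hWV_lt j h
      · rw [hWV_lt j h, hWV_lt ⟨(j : ℕ) - 1, by have := j.isLt; omega⟩ (by dsimp only; omega)]
    · exact absurd (Fin.ext h) hj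
    · have h0 : (j : ℕ) ≠ 0 := by omega
      simp only [grayWord, dif_neg h0]
      set j' : Fin n := ⟨(j : ℕ) - 1, by have := j.isLt; omega⟩ with hj'def
      rcases eq_or_lt_of_le (show (M : ℕ) + 1 ≤ (j : ℕ) from h) with h1 | h1
      · have hj'M : j' = M := Fin.ext (by rw [hj'def]; dsimp only; omega)
        rw [hj'M]
        obtain ⟨hw1, hv1⟩ := hgt j h
        have e1 : w j = (0 : Fin c) - 1 := by
          apply Fin.ext
          rw [hw1, Fin.sub_def]
          simp [Fin.val_one', hone, Nat.mod_eq_of_lt (show c - 1 < c by omega)]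
        have e2 : v j = 0 := Fin.ext (by simp [hv1])
        have e3 : v M = w M + 1 := by
          apply Fin.ext
          rw [hWM, Fin.add_def]
          simp [Fin.val_one', hone]
          exact (Nat.mod_eq_of_lt hWMb).symm
        rw [e1, e2, e3]
        abel
      · obtain ⟨hw1, hv1⟩ := hgt j h
        obtain ⟨hw2, hv2⟩ := hgt j' (by rw [hj'def]; dsimp only; omega)
        have ew : w j = w j' := Fin.ext (by rw [hw1, hw2])
        have ev : v j = v j' := Fin.ext (by rw [hv1, hv2])
        rw [ew, ev, sub_self, sub_self]
  -- Gray codes differ at M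
  have hdiff : grayWord w M ≠ grayWord v M := by
    have hne : w M ≠ v M := by
      intro hh
      rw [hh] at hWM
      omega
    simp only [grayWord]
    split_ifs with h0
    · exact hne
    · intro hh
      rw [← hWV_lt ⟨(M : ℕ) - 1, by have := M.isLt; omega⟩ (by dsimp only; omega)] at hh
      exact hne (sub_left_inj.mp hh)
  have hfilter : (Finset.univ.filter fun j : Fin n => grayWord w j ≠ grayWord v j) = {M} := by
    ext j
    simp only [Finset.mem_filter, Finset.mem_univ, true_and, Finset.mem_singleton]
    constructor
    · intro h
      by_contra hne
      exact h (hsame j hne)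
    · rintro rfl
      exact hdiff
  rw [hfilter, Finset.card_singleton]
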